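/- If (aₙ) are complex numbers with |aₙ| ≤ K/n! for some constant K > 0, then the binomial series Σ_{n=0}^∞ aₙ z^{\underline{n}} converges uniformly on every compact subset of the right half plane Re z > 0. -/

import Mathlib

open Filter

/-- Falling factorial. -/
noncomputable def ff (z : ℂ) : ℕ → ℂ
  | 0 => 1
  | n + 1 => ff z n * (z - n)

lemma ff_eq_prod (z : ℂ) (n : ℕ) : ff z n = ∏ k ∈ Finset.range n, (z - k) := by
  induction n with
  | zero => simp [ff]
  | succ n ih => simp [ff, Finset.prod_range_succ, ih]

set_option maxHeartbeats 1000000 in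
/-- If `|aₙ| ≤ K/n!` then the binomial series converges uniformly on every compact
subset of the right half plane `Re z > 0`. -/
theorem stmt_10 (a : ℕ → ℂ) (K : ℝ) (hK : 0 < K)
    (ha : ∀ n : ℕ, ‖a n‖ ≤ K / (n.factorial : ℝ)) :
    ∃ y : ℂ → ℂ, ∀ S : Set ℂ, IsCompact S → S ⊆ {z : ℂ | 0 < z.re} →
      TendstoUniformlyOn (fun N z => ∑ n ∈ Finset.range N, a n * ff z n) y atTop S := by
  refine ⟨fun z => ∑' n, a n * ff z n, ?_⟩
  intro S hS hSsub
  rcases S.eq_empty_or_nonempty with rfl | hne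
  · exact tendstoUniformlyOn_empty
  -- bound on norms
  obtain ⟨w, hwS, hw⟩ := hS.exists_isMaxOn hne continuous_norm.continuousOn
  set R : ℝ := ‖w‖ with hR
  have hR0 : 0 ≤ R := norm_nonneg w
  have hRle : ∀ z ∈ S, ‖z‖ ≤ R := fun z hz => hw hz
  -- lower bound on real parts
  obtain ⟨v, hvS, hv⟩ := hS.exists_isMinOn hne Complex.continuous_re.continuousOn
  set δ : ℝ := v.re with hδdef
  have hδ0 : 0 < δ := hSsub hvS
  have hδle : ∀ z ∈ S, δ ≤ z.re := fun z hz => hv hz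
  have hδR : δ ≤ R := le_trans (Complex.re_le_norm v) (hRle v hvS)
  -- threshold
  set c : ℝ := 2 * R + 2 * R ^ 2 / δ with hc
  have hc0 : 0 ≤ c := by positivity
  set k₀ : ℕ := ⌈c⌉₊ + 1 with hk₀
  have hk₀c : c ≤ (k₀ : ℝ) := by
    push_cast
    exact le_trans (Nat.le_ceil c) (by rw [hk₀]; push_cast; linarith)
  -- key estimate
  have key : ∀ z ∈ S, ∀ k : ℕ, k₀ ≤ k → ‖z - k‖ ≤ (k : ℝ) - δ / 2 := by
    intro z hz k hk
    have hkc : c ≤ (k : ℝ) := le_trans hk₀c (by exact_mod_cast hk)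
    have hR2δ : 0 ≤ 2 * R ^ 2 / δ := by positivity
    have hkδ : δ / 2 ≤ (k : ℝ) := by rw [hc] at hkc; linarith
    have hx : δ ≤ z.re := hδle z hz
    have hxy : z.re ^ 2 + z.im ^ 2 ≤ R ^ 2 := by
      have h1 : ‖z‖ ^ 2 ≤ R ^ 2 := by
        have := hRle z hz
        nlinarith [norm_nonneg z]
      rwa [Complex.sq_norm, Complex.normSq_apply, ← pow_two, ← pow_two] at h1
    have hsq : ‖z - k‖ ^ 2 ≤ ((k : ℝ) - δ / 2) ^ 2 := by
      have h2 : ‖z - k‖ ^ 2 = (z.re - k) ^ 2 + z.im ^ 2 := by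
        rw [Complex.sq_norm, Complex.normSq_apply]
        simp [pow_two]
      rw [h2]
      have hkδ2 : δ * (k : ℝ) ≥ 2 * R ^ 2 := by
        rw [hc] at hkc
        have : 2 * R ^ 2 / δ ≤ (k : ℝ) := by nlinarith
        calc 2 * R ^ 2 = δ * (2 * R ^ 2 / δ) := by field_simp
          _ ≤ δ * k := by nlinarith
      nlinarith [sq_nonneg δ,
        mul_nonneg (Nat.cast_nonneg (α := ℝ) k) (sub_nonneg.2 hx)]
    have h3 : 0 ≤ (k : ℝ) - δ / 2 := by linarith
    nlinarith [norm_nonneg (z - k)]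
  -- the majorant
  set r : ℕ → ℝ := fun k => if k < k₀ then (R + k) / (k + 1) else ((k : ℝ) - δ / 2) / (k + 1)
    with hr
  have hr0 : ∀ k, 0 ≤ r k := by
    intro k
    rw [hr]
    dsimp only
    split
    · positivity
    · next h =>
      have hk : k₀ ≤ k := le_of_not_gt h
      have hck : c ≤ (k : ℝ) := le_trans hk₀c (by exact_mod_cast hk)
      rw [hc] at hck
      have hR2δ : 0 ≤ 2 * R ^ 2 / δ := by positivity
      have : δ / 2 ≤ (k : ℝ) := by linarith
      have h1 : (0:ℝ) < (k:ℝ) + 1 := by positivity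
      exact div_nonneg (by linarith) h1.le
  set u : ℕ → ℝ := fun n => K * ∏ k ∈ Finset.range n, r k with hu
  have hu0 : ∀ n, 0 ≤ u n := fun n =>
    mul_nonneg hK.le (Finset.prod_nonneg fun k _ => hr0 k)
  -- the termwise bound
  have hfu : ∀ n : ℕ, ∀ z ∈ S, ‖a n * ff z n‖ ≤ u n := by
    intro n z hz
    rw [norm_mul, ff_eq_prod]
    have h1 : ‖∏ k ∈ Finset.range n, (z - k)‖ = ∏ k ∈ Finset.range n, ‖z - (k:ℂ)‖ :=
      norm_prod _ _
    rw [h1]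
    have hfac : (n.factorial : ℝ) = ∏ k ∈ Finset.range n, ((k : ℝ) + 1) := by
      rw [← Finset.prod_range_add_one_eq_factorial]
      push_cast
      exact Finset.prod_congr rfl fun x _ => by ring
    have h2 : K / n.factorial * ∏ k ∈ Finset.range n, ‖z - (k:ℂ)‖
        = K * ∏ k ∈ Finset.range n, (‖z - (k:ℂ)‖ / ((k : ℝ) + 1)) := by
      rw [Finset.prod_div_distrib, ← hfac]
      ring
    have h3 : ‖a n‖ * ∏ k ∈ Finset.range n, ‖z - (k:ℂ)‖
        ≤ K / n.factorial * ∏ k ∈ Finset.range n, ‖z - (k:ℂ)‖ := by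
      apply mul_le_mul_of_nonneg_right (ha n)
      exact Finset.prod_nonneg fun k _ => norm_nonneg _
    refine le_trans h3 (le_trans (le_of_eq h2) ?_)
    rw [hu]
    apply mul_le_mul_of_nonneg_left _ hK.le
    apply Finset.prod_le_prod
    · intro k _; positivity
    · intro k _
      have hk1 : (0:ℝ) < (k:ℝ) + 1 := by positivity
      rw [hr]
      dsimp only
      split
      · gcongr
        calc ‖z - (k:ℂ)‖ ≤ ‖z‖ + ‖(k:ℂ)‖ := norm_sub_le _ _
          _ ≤ R + k := by
            simp only [Complex.norm_natCast]
            exact add_le_add_left (hRle z hz) _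
      · next h =>
        gcongr
        exact key z hz k (le_of_not_gt h)
  -- summability of the majorant
  have hrec : ∀ n : ℕ, k₀ ≤ n → ((n : ℝ) + 1) * u (n + 1) = ((n : ℝ) - δ / 2) * u n := by
    intro n hn
    rw [hu]
    dsimp only
    rw [Finset.prod_range_succ, hr]
    dsimp only
    rw [if_neg (not_lt.2 hn)]
    have h1 : ((n:ℝ) + 1) ≠ 0 := by positivity
    have h2 : ∀ P : ℝ, ((n:ℝ) + 1) * (K * (P * (((n:ℝ) - δ / 2) / ((n:ℝ) + 1))))
        = ((n:ℝ) - δ / 2) * (K * P) := by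
      intro P
      have h3 : ((n:ℝ) + 1) * ((n:ℝ) + 1)⁻¹ = 1 := mul_inv_cancel₀ h1
      rw [div_eq_mul_inv]
      linear_combination (K * P * ((n:ℝ) - δ / 2)) * h3
    exact h2 _
  clear_value R δ c k₀ r u
  have tel : ∀ N : ℕ, ∑ i ∈ Finset.range N, δ / 2 * u (k₀ + i)
      = (k₀ : ℝ) * u k₀ - ((k₀ + N : ℕ) : ℝ) * u (k₀ + N) := by
    intro N
    induction N with
    | zero => simp
    | succ N ih =>
      rw [Finset.sum_range_succ, ih]
      have h := hrec (k₀ + N) (Nat.le_add_right _ _)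
      push_cast at h ⊢
      have : k₀ + (N + 1) = (k₀ + N) + 1 := by ring
      rw [this]
      linarith
  have hsum : Summable fun i => u (k₀ + i) := by
    apply summable_of_sum_range_le (c := 2 / δ * ((k₀ : ℝ) * u k₀)) (fun i => hu0 _)
    intro N
    have h1 := tel N
    have h2 : 0 ≤ ((k₀ + N : ℕ) : ℝ) * u (k₀ + N) :=
      mul_nonneg (Nat.cast_nonneg _) (hu0 _)
    have h3 : ∑ i ∈ Finset.range N, δ / 2 * u (k₀ + i) ≤ (k₀ : ℝ) * u k₀ := by linarith
    rw [← Finset.mul_sum] at h3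
    have h4 : 0 < δ / 2 := by linarith
    calc ∑ i ∈ Finset.range N, u (k₀ + i)
        = 2 / δ * (δ / 2 * ∑ i ∈ Finset.range N, u (k₀ + i)) := by field_simp
      _ ≤ 2 / δ * ((k₀ : ℝ) * u k₀) := by
          apply mul_le_mul_of_nonneg_left h3 (by positivity)
  have husum : Summable u := by
    have : Summable fun i => u (i + k₀) := by
      apply hsum.congr
      intro i
      rw [Nat.add_comm]
    exact (summable_nat_add_iff k₀).mp this
  exact tendstoUniformlyOn_tsum_nat husum fun n z hz => hfu n z hz
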